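/- Let $(X_n : n \in \omega)$ be a sequentially absorbing covering of a topological space $X$, let $Y$ be a first countable topological space, and let $f : Y \to X$ be continuous. Then for every $y \in Y$ there exist a neighborhood $U$ of $y$ in $Y$ and a number $n \in \omega$ such that $f(U) \subseteq X_n$. -/
import Mathlib

open Filter Topology Set

theorem continuous_into_seq_absorbing_locally_into_piece
    {X Y : Type*} [TopologicalSpace X] [TopologicalSpace Y]
    [FirstCountableTopology Y]
    (Xn : ℕ → Set X)
    (hcover : (⋃ n, Xn n) = Set.univ)
    (hmono : Monotone Xn)
    (habs : ∀ (u : ℕ → X) (x : X), Tendsto u atTop (𝓝 x) →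
      ∃ k, ∀ n, u n ∈ Xn k)
    (f : Y → X) (hf : Continuous f) :
    ∀ y : Y, ∃ U ∈ 𝓝 y, ∃ n, f '' U ⊆ Xn n := by
  intro y
  by_contra h
  push_neg at h
  obtain ⟨B, hB⟩ := (𝓝 y).exists_antitone_basis
  have hpt : ∀ n, ∃ z ∈ B n, f z ∉ Xn n := by
    intro n
    have := h (B n) (hB.mem n) n
    rw [Set.not_subset] at this
    obtain ⟨x, hx, hx'⟩ := this
    obtain ⟨z, hz, rfl⟩ := hx
    exact ⟨z, hz, hx'⟩
  choose z hz hz' using hpt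
  have hzt : Tendsto z atTop (𝓝 y) := hB.tendsto hz
  obtain ⟨k, hk⟩ := habs (f ∘ z) (f y) ((hf.tendsto y).comp hzt)
  exact hz' k (hk k)
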